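/- arXiv:1810.03656 — 4 statements merged into one kernel-verified Lean document; each statement's English description precedes it below -/
import Mathlib

section
/- For any two random variables X and Y defined on the same probability space and any real numbers a ≤ b, the probability P(a ≤ X ≤ b) is at most (1/2)·(1 + P(|X−Y| ≤ b−a) + d_TV(law(X), law(Y))), where d_TV denotes the total variation distance between the laws of X and Y. -/
open MeasureTheory

/-- Total variation distance between two measures: sup over measurable sets
of the absolute difference of the (real-valued) measures. -/
noncomputable def dTV {Ω : Type*} [MeasurableSpace Ω] (μ ν : Measure Ω) : ℝ :=
  ⨆ A : {A : Set Ω // MeasurableSet A}, |(μ A).toReal - (ν A).toReal|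

lemma abs_le_dTV {Ω : Type*} [MeasurableSpace Ω] (μ ν : Measure Ω)
    [IsProbabilityMeasure μ] [IsProbabilityMeasure ν] {A : Set Ω} (hA : MeasurableSet A) :
    |(μ A).toReal - (ν A).toReal| ≤ dTV μ ν := by
  refine le_ciSup (f := fun B : {B : Set Ω // MeasurableSet B} =>
    |(μ B.1).toReal - (ν B.1).toReal|) ?_ ⟨A, hA⟩
  refine ⟨2, ?_⟩
  rintro x ⟨B, rfl⟩
  have h1 : (μ B.1).toReal ≤ 1 := by
    simpa using ENNReal.toReal_mono (by simp) (prob_le_one (μ := μ) (s := B.1))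
  have h2 : (ν B.1).toReal ≤ 1 := by
    simpa using ENNReal.toReal_mono (by simp) (prob_le_one (μ := ν) (s := B.1))
  have h3 : 0 ≤ (μ B.1).toReal := ENNReal.toReal_nonneg
  have h4 : 0 ≤ (ν B.1).toReal := ENNReal.toReal_nonneg
  rw [abs_sub_le_iff]; constructor <;> linarith

/-- For random variables `X, Y` on a common probability space and `a ≤ b`,
`P(a ≤ X ≤ b) ≤ ½ (1 + P(|X - Y| ≤ b - a) + d_TV(law X, law Y))`. -/
theorem stmt0 {Ω : Type*} [MeasurableSpace Ω] (P : Measure Ω) [IsProbabilityMeasure P]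
    (X Y : Ω → ℝ) (hX : Measurable X) (hY : Measurable Y)
    (a b : ℝ) (hab : a ≤ b) :
    (P {ω | a ≤ X ω ∧ X ω ≤ b}).toReal ≤
      (1 / 2) * (1 + (P {ω | |X ω - Y ω| ≤ b - a}).toReal
        + dTV (P.map X) (P.map Y)) := by
  set S : Set Ω := X ⁻¹' Set.Icc a b with hS
  set T : Set Ω := Y ⁻¹' Set.Icc a b with hT
  have hSeq : {ω | a ≤ X ω ∧ X ω ≤ b} = S := by ext ω; simp [hS, Set.mem_Icc]
  rw [hSeq]
  have hSm : MeasurableSet S := hX measurableSet_Icc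
  have hTm : MeasurableSet T := hY measurableSet_Icc
  -- inclusion
  have hsub : S ∩ T ⊆ {ω | |X ω - Y ω| ≤ b - a} := by
    rintro ω ⟨⟨h1, h2⟩, ⟨h3, h4⟩⟩
    rw [Set.mem_setOf_eq, abs_sub_le_iff]
    constructor <;> linarith
  have hinter : (P (S ∩ T)).toReal ≤ (P {ω | |X ω - Y ω| ≤ b - a}).toReal :=
    ENNReal.toReal_mono (measure_ne_top _ _) (measure_mono hsub)
  have hunion : (P (S ∪ T)).toReal ≤ 1 := by
    simpa using ENNReal.toReal_mono (by simp) (prob_le_one (μ := P) (s := S ∪ T))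
  have hadd : (P S).toReal + (P T).toReal = (P (S ∪ T)).toReal + (P (S ∩ T)).toReal := by
    rw [← ENNReal.toReal_add (measure_ne_top _ _) (measure_ne_top _ _),
      ← ENNReal.toReal_add (measure_ne_top _ _) (measure_ne_top _ _),
      measure_union_add_inter S hTm]
  -- dTV bound
  have hmapX : (P.map X) (Set.Icc a b) = P S := Measure.map_apply hX measurableSet_Icc
  have hmapY : (P.map Y) (Set.Icc a b) = P T := Measure.map_apply hY measurableSet_Icc
  have : IsProbabilityMeasure (P.map X) := Measure.isProbabilityMeasure_map hX.aemeasurable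
  have : IsProbabilityMeasure (P.map Y) := Measure.isProbabilityMeasure_map hY.aemeasurable
  have hdtv : |(P S).toReal - (P T).toReal| ≤ dTV (P.map X) (P.map Y) := by
    have := abs_le_dTV (P.map X) (P.map Y) (A := Set.Icc a b) measurableSet_Icc
    rwa [hmapX, hmapY] at this
  have hdtv' : (P S).toReal - (P T).toReal ≤ dTV (P.map X) (P.map Y) :=
    le_trans (le_abs_self _) hdtv
  linarith
end

section
/- Let X be a real-valued random variable with law λ_X, and let X' be a random variable whose law λ_{X'} is absolutely continuous with respect to λ_X with density f bounded by M. For ε ∈ (0,1), let Y be Bernoulli(ε) independent of (X, X'), and define X̃ = X' if Y = 1 and X̃ = X if Y = 0. Then the Hellinger affinity satisfies ρ(λ_X, λ_{X̃}) ≥ 1 − Cε², where C is a constant depending only on λ_X and λ_{X'} (not on ε). -/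
open MeasureTheory

lemma sqrt_lower_bound {x : ℝ} (hx : -1 ≤ x) :
    1 + x / 2 - x ^ 2 / 2 ≤ Real.sqrt (1 + x) := by
  rcases le_or_gt (1 + x / 2 - x ^ 2 / 2) 0 with h | h
  · exact h.trans (Real.sqrt_nonneg _)
  · have h1 : (0 : ℝ) ≤ 1 + x := by linarith
    rw [show (1 + x : ℝ) = (1 + x/2 - x^2/2) ^ 2 + ((1+x) - (1 + x/2 - x^2/2)^2) by ring]
    have hx2 : x < 2 := by nlinarith
    have key : 0 ≤ (1 + x) - (1 + x/2 - x^2/2)^2 := by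
      nlinarith [mul_nonneg (mul_nonneg (sq_nonneg x) (by linarith : (0:ℝ) ≤ x + 1)) (by linarith : (0:ℝ) ≤ 3 - x)]
    calc 1 + x/2 - x^2/2 = Real.sqrt ((1 + x/2 - x^2/2)^2) := by
          rw [Real.sqrt_sq h.le]
      _ ≤ _ := Real.sqrt_le_sqrt (by linarith)

/-- Let `λX` be a probability law on `ℝ` and `λX'` another law with density `f ≤ M`
with respect to `λX`.  For `ε ∈ (0,1)` the law of the mixture `X̃` (equal to `X'`
with probability `ε` and to `X` otherwise) is `ε λX' + (1-ε) λX`, whose density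
with respect to `λX` is `ε f + 1 - ε`, so the Hellinger affinity
`ρ(λX, λX̃) = ∫ √(ε f + 1 - ε) dλX`.  It satisfies `ρ(λX, λX̃) ≥ 1 - C ε²`
for a constant `C` depending only on `λX` and `λX'` (not on `ε`). -/
theorem stmt3 (lamX : Measure ℝ) [IsProbabilityMeasure lamX]
    (f : ℝ → ℝ) (hf : Measurable f) (hf0 : ∀ t, 0 ≤ f t)
    (M : ℝ) (hM : ∀ t, f t ≤ M)
    (lamX' : Measure ℝ)
    (hX' : lamX' = lamX.withDensity (fun t => ENNReal.ofReal (f t)))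
    [IsProbabilityMeasure lamX'] :
    ∃ C : ℝ, 0 < C ∧ ∀ ε : ℝ, 0 < ε → ε < 1 →
      1 - C * ε ^ 2 ≤ ∫ t, Real.sqrt (ε * f t + (1 - ε)) ∂lamX := by
  have hM0 : 0 ≤ M := (hf0 0).trans (hM 0)
  have hfi : Integrable f lamX := by
    refine (integrable_const M).mono' hf.aestronglyMeasurable (ae_of_all _ fun t => ?_)
    rw [Real.norm_eq_abs, abs_of_nonneg (hf0 t)]; exact hM t
  -- ∫ f = 1
  have hint1 : ∫ t, f t ∂lamX = 1 := by
    have h1 : ∫⁻ t, ENNReal.ofReal (f t) ∂lamX = 1 := by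
      have := (measure_univ : lamX' Set.univ = 1)
      rwa [hX', withDensity_apply _ MeasurableSet.univ, setLIntegral_univ] at this
    have h2 : ENNReal.ofReal (∫ t, f t ∂lamX) = 1 := by
      rw [ofReal_integral_eq_lintegral_ofReal hfi (ae_of_all _ hf0), h1]
    have h3 : 0 ≤ ∫ t, f t ∂lamX := integral_nonneg hf0
    have := congrArg ENNReal.toReal h2
    rwa [ENNReal.toReal_ofReal h3, ENNReal.toReal_one] at this
  refine ⟨(M + 1) ^ 2 / 2, by positivity, fun ε hε0 hε1 => ?_⟩
  set g : ℝ → ℝ := fun t => (1 - ε / 2 - ε ^ 2 * (M + 1) ^ 2 / 2) + (ε / 2) * f t with hg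
  have hgi : Integrable g lamX := (integrable_const _).add (hfi.const_mul _)
  have hsi : Integrable (fun t => Real.sqrt (ε * f t + (1 - ε))) lamX := by
    refine (integrable_const (Real.sqrt (M + 1))).mono'
      ((Real.continuous_sqrt.measurable.comp
        ((hf.const_mul ε).add_const (1 - ε))).aestronglyMeasurable)
      (ae_of_all _ fun t => ?_)
    rw [Real.norm_eq_abs, abs_of_nonneg (Real.sqrt_nonneg _)]
    apply Real.sqrt_le_sqrt
    have h1 : ε * f t ≤ f t := by nlinarith [hf0 t]
    have := hM t; linarith
  have hle : ∀ t, g t ≤ Real.sqrt (ε * f t + (1 - ε)) := by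
    intro t
    have hx : -1 ≤ ε * (f t - 1) := by nlinarith [hf0 t]
    have hb := sqrt_lower_bound hx
    have heq : 1 + ε * (f t - 1) = ε * f t + (1 - ε) := by ring
    rw [heq] at hb
    refine le_trans ?_ hb
    have habs : (ε * (f t - 1)) ^ 2 ≤ ε ^ 2 * (M + 1) ^ 2 := by
      have h1 : -(M + 1) ≤ f t - 1 := by linarith [hf0 t]
      have h2 : f t - 1 ≤ M + 1 := by linarith [hM t]
      have : (f t - 1) ^ 2 ≤ (M + 1) ^ 2 := by nlinarith
      calc (ε * (f t - 1)) ^ 2 = ε ^ 2 * (f t - 1) ^ 2 := by ring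
        _ ≤ ε ^ 2 * (M + 1) ^ 2 := by nlinarith [sq_nonneg ε]
    simp only [hg]
    nlinarith
  have := integral_mono hgi hsi hle
  calc 1 - (M + 1) ^ 2 / 2 * ε ^ 2 = ∫ t, g t ∂lamX := by
        simp only [hg]
        rw [integral_add (integrable_const _) (hfi.const_mul _),
          integral_const, integral_const_mul, hint1]
        simp [measure_univ]
        ring
    _ ≤ _ := this
end

section
/- Let X₁,…,Xₙ be i.i.d. with law λ_X, and X₁',…,Xₙ' be i.i.d. with law λ_{X'}, where λ_{X'} is absolutely continuous with respect to λ_X with bounded density. For each i let Y_i be Bernoulli(ε_i) independent of everything else, and set X̃_i = X_i' if Y_i = 1 and X̃_i = X_i otherwise. Then d_TV(law(X₁,…,Xₙ), law(X̃₁,…,X̃ₙ)) ≤ C (∑_{i=1}^n ε_i²)^{1/2}, where C depends only on λ_X and λ_{X'}. -/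
open MeasureTheory

private lemma intOfBounded {α : Type*} [MeasurableSpace α] {μ : Measure α} [IsFiniteMeasure μ]
    {h : α → ℝ} (hm : Measurable h) {B : ℝ} (hb : ∀ t, |h t| ≤ B) : Integrable h μ :=
  (integrable_const B).mono' hm.aestronglyMeasurable (ae_of_all _ fun t => by
    simpa [Real.norm_eq_abs] using hb t)

private lemma integral_pi_prod {n : ℕ} (μ : Measure ℝ) [SigmaFinite μ] (h : Fin n → ℝ → ℝ) :
    ∫ x : Fin n → ℝ, ∏ i, h i (x i) ∂(Measure.pi fun _ => μ) = ∏ i, ∫ t, h i t ∂μ := by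
  letI : MeasureSpace ℝ := ⟨μ⟩
  haveI : SigmaFinite (volume : Measure ℝ) := ‹_›
  rw [show (Measure.pi fun _ : Fin n => μ) = (volume : Measure (Fin n → ℝ)) from
    (MeasureTheory.volume_pi).symm]
  exact MeasureTheory.integral_fin_nat_prod_eq_prod h

private lemma sqrt_prod' {ι : Type*} (s : Finset ι) (h : ι → ℝ) (h0 : ∀ i ∈ s, 0 ≤ h i) :
    Real.sqrt (∏ i ∈ s, h i) = ∏ i ∈ s, Real.sqrt (h i) := by
  induction s using Finset.cons_induction with
  | empty => simp
  | cons i s hi ih =>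
    rw [Finset.prod_cons, Finset.prod_cons, Real.sqrt_mul (h0 i (Finset.mem_cons_self i s)),
      ih (fun j hj => h0 j (Finset.mem_cons_of_mem hj))]

private lemma prod_ge_one_sub_sum {ι : Type*} (s : Finset ι) (a : ι → ℝ)
    (h0 : ∀ i ∈ s, 0 ≤ a i) (h1 : ∀ i ∈ s, a i ≤ 1) :
    1 - ∑ i ∈ s, (1 - a i) ≤ ∏ i ∈ s, a i := by
  induction s using Finset.cons_induction with
  | empty => simp
  | cons i s hi ih =>
    rw [Finset.prod_cons, Finset.sum_cons]
    have hs : 0 ≤ ∑ j ∈ s, (1 - a j) :=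
      Finset.sum_nonneg fun j hj => by linarith [h1 j (Finset.mem_cons_of_mem hj)]
    have ih' := ih (fun j hj => h0 j (Finset.mem_cons_of_mem hj))
      (fun j hj => h1 j (Finset.mem_cons_of_mem hj))
    have hai0 := h0 i (Finset.mem_cons_self i s)
    have hai1 := h1 i (Finset.mem_cons_self i s)
    nlinarith [mul_le_mul_of_nonneg_left ih' hai0]

private lemma sqrt_lower (x : ℝ) (hx : 0 ≤ x) :
    1 + (x - 1) / 2 - (x - 1) ^ 2 / 2 ≤ Real.sqrt x := by
  have hy : 0 ≤ Real.sqrt x := Real.sqrt_nonneg x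
  have hx2 : Real.sqrt x ^ 2 = x := Real.sq_sqrt hx
  nlinarith [sq_nonneg (Real.sqrt x - 1), mul_nonneg hy (sq_nonneg (Real.sqrt x - 1)),
    mul_nonneg (mul_nonneg hy hy) (sq_nonneg (Real.sqrt x - 1))]

private lemma sqrt_upper (x : ℝ) (hx : 0 ≤ x) : Real.sqrt x ≤ (1 + x) / 2 := by
  have hx2 : Real.sqrt x ^ 2 = x := Real.sq_sqrt hx
  nlinarith [sq_nonneg (Real.sqrt x - 1)]

private lemma amgm_pt (t x : ℝ) (ht : 0 < t) (hx : 0 ≤ x) :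
    |1 - x| ≤ t / 2 * (1 - Real.sqrt x) ^ 2 + 1 / (2 * t) * (1 + Real.sqrt x) ^ 2 := by
  have hy : 0 ≤ Real.sqrt x := Real.sqrt_nonneg x
  have hx2 : Real.sqrt x ^ 2 = x := Real.sq_sqrt hx
  have h1 : |1 - x| = |1 - Real.sqrt x| * (1 + Real.sqrt x) := by
    rw [← abs_of_nonneg (by linarith : (0:ℝ) ≤ 1 + Real.sqrt x), ← abs_mul]
    congr 1; nlinarith
  rw [h1]
  have h2 : ((1 - Real.sqrt x)^2 : ℝ) = |1 - Real.sqrt x|^2 := (sq_abs _).symm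
  rw [h2, ← mul_le_mul_iff_right₀ (show (0:ℝ) < 2*t by linarith)]
  have h3 : 2*t*(t/2*|1-Real.sqrt x|^2 + 1/(2*t)*(1+Real.sqrt x)^2)
      = t^2*|1-Real.sqrt x|^2 + (1+Real.sqrt x)^2 := by field_simp
  rw [h3]
  nlinarith [sq_nonneg (t*|1-Real.sqrt x| - (1+Real.sqrt x))]

private lemma wd_apply {α : Type*} [MeasurableSpace α] (μ : Measure α) [IsFiniteMeasure μ]
    (h : α → ℝ) (hm : Measurable h) (h0 : ∀ t, 0 ≤ h t) (B : ℝ) (hB : ∀ t, h t ≤ B)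
    {A : Set α} (hA : MeasurableSet A) :
    μ.withDensity (fun t => ENNReal.ofReal (h t)) A
      = ENNReal.ofReal (∫ t, A.indicator h t ∂μ) := by
  rw [withDensity_apply _ hA, ← lintegral_indicator hA]
  have hcomm : A.indicator (fun t => ENNReal.ofReal (h t))
      = fun t => ENNReal.ofReal (A.indicator h t) := by
    funext t
    by_cases ht : t ∈ A
    · simp [Set.indicator_of_mem ht]
    · simp [Set.indicator_of_notMem ht]
  rw [hcomm, ← ofReal_integral_eq_lintegral_ofReal]
  · exact (intOfBounded hm (fun t => abs_le.2 ⟨by linarith [h0 t, hB t], hB t⟩)).indicator hA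
  · exact ae_of_all _ fun t => Set.indicator_nonneg (fun s _ => h0 s) t

private lemma mixture (lamX : Measure ℝ)
    (f : ℝ → ℝ) (hf : Measurable f) (hf0 : ∀ t, 0 ≤ f t)
    (lamX' : Measure ℝ)
    (hX' : lamX' = lamX.withDensity (fun t => ENNReal.ofReal (f t)))
    (e : ℝ) (he : e ∈ Set.Icc (0:ℝ) 1) :
    ENNReal.ofReal e • lamX' + ENNReal.ofReal (1 - e) • lamX
      = lamX.withDensity (fun t => ENNReal.ofReal (e * f t + (1 - e))) := by
  have h1 : (fun t => ENNReal.ofReal (e * f t + (1 - e)))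
      = (fun t => ENNReal.ofReal e • ENNReal.ofReal (f t)) + (fun _ => ENNReal.ofReal (1 - e)) := by
    funext t
    simp only [Pi.add_apply, smul_eq_mul]
    rw [ENNReal.ofReal_add (mul_nonneg he.1 (hf0 t)) (by linarith [he.2]),
      ENNReal.ofReal_mul he.1]
  rw [h1, withDensity_add_right _ measurable_const,
    show (fun t => ENNReal.ofReal e • ENNReal.ofReal (f t))
      = ENNReal.ofReal e • (fun t => ENNReal.ofReal (f t)) from rfl,
    withDensity_smul _ hf.ennreal_ofReal, withDensity_const, ← hX']

private lemma pi_wd {n : ℕ} (μ : Measure ℝ) [IsProbabilityMeasure μ]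
    (g : Fin n → ℝ → ℝ) (hgm : ∀ i, Measurable (g i)) (hg0 : ∀ i t, 0 ≤ g i t)
    (B : ℝ) (hgB : ∀ i t, g i t ≤ B) :
    Measure.pi (fun i => μ.withDensity fun t => ENNReal.ofReal (g i t))
      = (Measure.pi fun _ : Fin n => μ).withDensity
          (fun x => ENNReal.ofReal (∏ i, g i (x i))) := by
  have hGm : Measurable (fun x : Fin n → ℝ => ∏ i, g i (x i)) :=
    Finset.measurable_prod _ fun i _ => (hgm i).comp (measurable_pi_apply i)
  have hG0 : ∀ x : Fin n → ℝ, 0 ≤ ∏ i, g i (x i) :=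
    fun x => Finset.prod_nonneg fun i _ => hg0 i (x i)
  have hGB : ∀ x : Fin n → ℝ, ∏ i, g i (x i) ≤ B ^ n := by
    intro x
    calc ∏ i, g i (x i) ≤ ∏ _i : Fin n, B :=
          Finset.prod_le_prod (fun i _ => hg0 i (x i)) (fun i _ => hgB i (x i))
      _ = B ^ n := by rw [Finset.prod_const, Finset.card_univ, Fintype.card_fin]
  haveI : ∀ i, IsFiniteMeasure (μ.withDensity fun t => ENNReal.ofReal (g i t)) := by
    intro i
    constructor
    rw [wd_apply μ (g i) (hgm i) (hg0 i) B (hgB i) MeasurableSet.univ]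
    exact ENNReal.ofReal_lt_top
  refine Measure.pi_eq fun s hs => ?_
  rw [wd_apply _ _ hGm hG0 (B ^ n) hGB (MeasurableSet.univ_pi hs)]
  have hind : Set.indicator (Set.pi Set.univ s) (fun x => ∏ i, g i (x i))
      = fun x => ∏ i, (s i).indicator (g i) (x i) := by
    funext x
    by_cases hx : x ∈ Set.pi Set.univ s
    · rw [Set.indicator_of_mem hx]
      exact Finset.prod_congr rfl fun i _ =>
        (Set.indicator_of_mem (hx i (Set.mem_univ i)) (g i)).symm
    · rw [Set.indicator_of_notMem hx]
      obtain ⟨i, -, hi⟩ : ∃ i, i ∈ Set.univ ∧ x i ∉ s i := by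
        simpa [Set.mem_pi] using hx
      exact (Finset.prod_eq_zero (Finset.mem_univ i)
        (Set.indicator_of_notMem hi (g i))).symm
  rw [hind, integral_pi_prod,
    ENNReal.ofReal_prod_of_nonneg (fun i _ => integral_nonneg
      (fun t => Set.indicator_nonneg (fun u _ => hg0 i u) t))]
  exact Finset.prod_congr rfl fun i _ =>
    (wd_apply μ (g i) (hgm i) (hg0 i) B (hgB i) (hs i)).symm

set_option maxHeartbeats 1000000 in
/-- Let `X₁,…,Xₙ` be i.i.d. with law `λX` and `X̃ᵢ = Xᵢ'` (law `λX'`, with bounded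
density `f ≤ M` with respect to `λX`) with probability `εᵢ`, `X̃ᵢ = Xᵢ` otherwise,
all independently.  The law of `(X̃₁,…,X̃ₙ)` is the product of the mixtures
`εᵢ λX' + (1-εᵢ) λX`, and
`d_TV(law(X₁,…,Xₙ), law(X̃₁,…,X̃ₙ)) ≤ C (∑ εᵢ²)^{1/2}`,
where `C` depends only on `λX` and `λX'`. -/
theorem stmt6 (lamX : Measure ℝ) [IsProbabilityMeasure lamX]
    (f : ℝ → ℝ) (hf : Measurable f) (hf0 : ∀ t, 0 ≤ f t)
    (M : ℝ) (hM : ∀ t, f t ≤ M)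
    (lamX' : Measure ℝ)
    (hX' : lamX' = lamX.withDensity (fun t => ENNReal.ofReal (f t)))
    [IsProbabilityMeasure lamX'] :
    ∃ C : ℝ, 0 < C ∧ ∀ (n : ℕ) (ε : Fin n → ℝ), (∀ i, ε i ∈ Set.Icc (0:ℝ) 1) →
      dTV (Measure.pi (fun _ : Fin n => lamX))
          (Measure.pi (fun i : Fin n =>
            ENNReal.ofReal (ε i) • lamX' + ENNReal.ofReal (1 - ε i) • lamX))
        ≤ C * Real.sqrt (∑ i, (ε i) ^ 2) := by
  have hM0 : 0 ≤ M := le_trans (hf0 0) (hM 0)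
  refine ⟨2 * (M + 1) + 1, by linarith, ?_⟩
  intro n ε hε
  haveI : Nonempty {A : Set (Fin n → ℝ) // MeasurableSet A} := ⟨⟨∅, MeasurableSet.empty⟩⟩
  set S := ∑ i, ε i ^ 2 with hSdef
  have hS0 : 0 ≤ S := Finset.sum_nonneg fun i _ => sq_nonneg _
  rcases eq_or_lt_of_le hS0 with hS | hS
  · -- degenerate case S = 0
    have hε0 : ∀ i, ε i = 0 := by
      intro i
      have h1 := (Finset.sum_eq_zero_iff_of_nonneg
        (fun i (_ : i ∈ Finset.univ) => sq_nonneg (ε i))).1 hS.symm i (Finset.mem_univ i)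
      exact pow_eq_zero_iff (two_ne_zero) |>.1 h1
    have hmeas : (fun i : Fin n => ENNReal.ofReal (ε i) • lamX' + ENNReal.ofReal (1 - ε i) • lamX)
        = fun _ => lamX := by
      funext i; simp [hε0 i]
    rw [hmeas]
    have hzero : dTV (Measure.pi fun _ : Fin n => lamX) (Measure.pi fun _ : Fin n => lamX) = 0 := by
      unfold dTV
      simp [sub_self, ciSup_const]
    rw [hzero]
    positivity
  · -- main case S > 0
    set g : Fin n → ℝ → ℝ := fun i t => ε i * f t + (1 - ε i) with hgdef
    have hgm : ∀ i, Measurable (g i) := fun i => (measurable_const.mul hf).add measurable_const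
    have hg0 : ∀ i t, 0 ≤ g i t := fun i t =>
      add_nonneg (mul_nonneg (hε i).1 (hf0 t)) (by linarith [(hε i).2])
    have hgB : ∀ i t, g i t ≤ M + 1 := by
      intro i t
      have h1 : ε i * f t ≤ M := by nlinarith [(hε i).1, (hε i).2, hf0 t, hM t]
      simp only [hgdef]
      nlinarith [(hε i).1]
    set Λ := Measure.pi fun _ : Fin n => lamX with hΛ
    have hpi : Measure.pi (fun i : Fin n =>
          ENNReal.ofReal (ε i) • lamX' + ENNReal.ofReal (1 - ε i) • lamX)
        = Λ.withDensity (fun x => ENNReal.ofReal (∏ i, g i (x i))) := by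
      rw [show (fun i : Fin n => ENNReal.ofReal (ε i) • lamX' + ENNReal.ofReal (1 - ε i) • lamX)
          = (fun i => lamX.withDensity fun t => ENNReal.ofReal (g i t)) from
        funext fun i => mixture lamX f hf hf0 lamX' hX' (ε i) (hε i)]
      exact pi_wd lamX g hgm hg0 (M + 1) hgB
    -- coordinate-level integrals
    have hfint : Integrable f lamX :=
      intOfBounded hf (fun t => abs_le.2 ⟨by linarith [hf0 t, hM t], hM t⟩)
    have hf1 : ∫ t, f t ∂lamX = 1 := by
      have h2 : ENNReal.ofReal (∫ t, f t ∂lamX) = ∫⁻ t, ENNReal.ofReal (f t) ∂lamX :=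
        ofReal_integral_eq_lintegral_ofReal hfint (ae_of_all _ hf0)
      have h3 : lamX' Set.univ = 1 := measure_univ
      rw [hX', withDensity_apply _ MeasurableSet.univ, Measure.restrict_univ, ← h2] at h3
      exact ENNReal.ofReal_eq_one.1 h3
    have hgint : ∀ i, Integrable (g i) lamX := fun i => intOfBounded (hgm i)
      (fun t => abs_le.2 ⟨by linarith [hg0 i t, hgB i t], hgB i t⟩)
    have hg1 : ∀ i, ∫ t, g i t ∂lamX = 1 := by
      intro i
      simp only [hgdef]
      rw [integral_add (hfint.const_mul _) (integrable_const _), integral_const_mul, hf1,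
        integral_const]
      simp
    have hsgint : ∀ i, Integrable (fun t => Real.sqrt (g i t)) lamX := fun i =>
      intOfBounded (hgm i).sqrt (fun t => abs_le.2
        ⟨le_trans (neg_nonpos.2 (Real.sqrt_nonneg _)) (Real.sqrt_nonneg _),
         Real.sqrt_le_sqrt (hgB i t)⟩)
    set r : Fin n → ℝ := fun i => ∫ t, Real.sqrt (g i t) ∂lamX with hrdef
    have hr0 : ∀ i, 0 ≤ r i := fun i => integral_nonneg fun t => Real.sqrt_nonneg _
    have hr1 : ∀ i, r i ≤ 1 := by
      intro i
      have hmono : r i ≤ ∫ t, (1 + g i t) / 2 ∂lamX :=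
        integral_mono (hsgint i) (((integrable_const 1).add (hgint i)).div_const 2)
          (fun t => sqrt_upper _ (hg0 i t))
      rw [integral_div, integral_add (integrable_const 1) (hgint i), integral_const, hg1 i]
        at hmono
      simpa using hmono
    have hc : (0:ℝ) < (M + 1) ^ 2 / 2 := by positivity
    set c := (M + 1) ^ 2 / 2 with hcdef
    have hsqint : ∀ i, Integrable (fun t => (g i t - 1) ^ 2) lamX := fun i =>
      intOfBounded (B := (M + 1) ^ 2) (((hgm i).sub measurable_const).pow_const 2) (fun t => by
        rw [abs_of_nonneg (sq_nonneg _)]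
        exact sq_le_sq' (by linarith [hg0 i t]) (by linarith [hgB i t]))
    have hsqbound : ∀ i t, (g i t - 1) ^ 2 ≤ ε i ^ 2 * (M + 1) ^ 2 := by
      intro i t
      have h1 : (g i t - 1) ^ 2 = ε i ^ 2 * (f t - 1) ^ 2 := by simp only [hgdef]; ring
      rw [h1]
      exact mul_le_mul_of_nonneg_left
        (sq_le_sq' (by linarith [hf0 t]) (by linarith [hM t])) (sq_nonneg _)
    have hrlow : ∀ i, 1 - c * ε i ^ 2 ≤ r i := by
      intro i
      have hL : Integrable (fun t => 1 + (g i t - 1) / 2 - (g i t - 1) ^ 2 / 2) lamX :=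
        ((integrable_const 1).add (((hgint i).sub (integrable_const 1)).div_const 2)).sub
          ((hsqint i).div_const 2)
      have hmono : ∫ t, (1 + (g i t - 1) / 2 - (g i t - 1) ^ 2 / 2) ∂lamX ≤ r i :=
        integral_mono hL (hsgint i) (fun t => sqrt_lower _ (hg0 i t))
      have hJ1 : Integrable (fun t => (g i t - 1) / 2) lamX :=
        ((hgint i).sub (integrable_const 1)).div_const 2
      have hJ2 : Integrable (fun t => 1 + (g i t - 1) / 2) lamX := (integrable_const 1).add hJ1
      have hJ3 : Integrable (fun t => (g i t - 1) ^ 2 / 2) lamX := (hsqint i).div_const 2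
      have hJ4 : Integrable (fun t => g i t - 1) lamX := (hgint i).sub (integrable_const 1)
      have hcalc : ∫ t, (1 + (g i t - 1) / 2 - (g i t - 1) ^ 2 / 2) ∂lamX
          = 1 - (∫ t, (g i t - 1) ^ 2 ∂lamX) / 2 := by
        rw [integral_sub hJ2 hJ3, integral_add (integrable_const 1) hJ1,
          integral_div, integral_sub (hgint i) (integrable_const 1), integral_const,
          integral_div, hg1 i]
        simp
      have hb : ∫ t, (g i t - 1) ^ 2 ∂lamX ≤ ε i ^ 2 * (M + 1) ^ 2 := by
        have := integral_mono (hsqint i) (integrable_const _) (fun t => hsqbound i t)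
        rwa [integral_const, probReal_univ, one_smul] at this
      rw [hcalc] at hmono
      rw [hcdef]
      linarith
    -- pi-level
    set G : (Fin n → ℝ) → ℝ := fun x => ∏ i, g i (x i) with hGdef
    have hGm : Measurable G :=
      Finset.measurable_prod _ fun i _ => (hgm i).comp (measurable_pi_apply i)
    have hG0 : ∀ x, 0 ≤ G x := fun x => Finset.prod_nonneg fun i _ => hg0 i (x i)
    have hGB : ∀ x, G x ≤ (M + 1) ^ n := by
      intro x
      calc G x ≤ ∏ _i : Fin n, (M + 1) :=
            Finset.prod_le_prod (fun i _ => hg0 i (x i)) (fun i _ => hgB i (x i))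
        _ = (M + 1) ^ n := by rw [Finset.prod_const, Finset.card_univ, Fintype.card_fin]
    have hGint : Integrable G Λ :=
      intOfBounded hGm (fun x => abs_le.2 ⟨by linarith [hG0 x, hGB x], hGB x⟩)
    have hsGint : Integrable (fun x => Real.sqrt (G x)) Λ :=
      intOfBounded hGm.sqrt (fun x => abs_le.2
        ⟨le_trans (neg_nonpos.2 (Real.sqrt_nonneg _)) (Real.sqrt_nonneg _),
         Real.sqrt_le_sqrt (hGB x)⟩)
    have hG1 : ∫ x, G x ∂Λ = 1 := by
      rw [hGdef, hΛ, integral_pi_prod]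
      exact Finset.prod_eq_one fun i _ => hg1 i
    set ρ := ∏ i, r i with hρdef
    have hρint : ∫ x, Real.sqrt (G x) ∂Λ = ρ := by
      have hfx : (fun x : Fin n → ℝ => Real.sqrt (G x))
          = fun x => ∏ i, Real.sqrt (g i (x i)) := by
        funext x
        exact sqrt_prod' _ _ (fun i _ => hg0 i (x i))
      rw [hfx, hΛ, integral_pi_prod lamX (fun i t => Real.sqrt (g i t))]
    have hρ0 : 0 ≤ ρ := Finset.prod_nonneg fun i _ => hr0 i
    have hρ1 : ρ ≤ 1 := Finset.prod_le_one (fun i _ => hr0 i) (fun i _ => hr1 i)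
    have hρlow : 1 - c * S ≤ ρ := by
      have h1 := prod_ge_one_sub_sum Finset.univ r (fun i _ => hr0 i) (fun i _ => hr1 i)
      have h2 : ∑ i, (1 - r i) ≤ ∑ i, c * ε i ^ 2 :=
        Finset.sum_le_sum fun i _ => by linarith [hrlow i]
      rw [← Finset.mul_sum] at h2
      rw [hSdef]
      linarith
    -- integrals of the squares
    have hD0 : (0:ℝ) ≤ Real.sqrt ((M + 1) ^ n) := Real.sqrt_nonneg _
    have hs1int : Integrable (fun x => (1 - Real.sqrt (G x)) ^ 2) Λ :=
      intOfBounded (B := (1 + Real.sqrt ((M + 1) ^ n)) ^ 2)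
        ((measurable_const.sub hGm.sqrt).pow_const 2) (fun x => by
        rw [abs_of_nonneg (sq_nonneg _)]
        exact sq_le_sq' (by linarith [Real.sqrt_le_sqrt (hGB x)])
          (by linarith [Real.sqrt_nonneg (G x)]))
    have hs2int : Integrable (fun x => (1 + Real.sqrt (G x)) ^ 2) Λ :=
      intOfBounded (B := (1 + Real.sqrt ((M + 1) ^ n)) ^ 2)
        ((measurable_const.add hGm.sqrt).pow_const 2) (fun x => by
        rw [abs_of_nonneg (sq_nonneg _)]
        exact sq_le_sq' (by linarith [Real.sqrt_nonneg (G x)])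
          (by linarith [Real.sqrt_le_sqrt (hGB x)]))
    have hsq1 : ∫ x, (1 - Real.sqrt (G x)) ^ 2 ∂Λ = 2 - 2 * ρ := by
      have hpt : ∀ x, (1 - Real.sqrt (G x)) ^ 2 = 1 - 2 * Real.sqrt (G x) + G x := by
        intro x
        have := Real.sq_sqrt (hG0 x)
        nlinarith [this]
      have hK1 : Integrable (fun x => 2 * Real.sqrt (G x)) Λ := hsGint.const_mul 2
      have hK2 : Integrable (fun x => 1 - 2 * Real.sqrt (G x)) Λ := (integrable_const 1).sub hK1
      rw [integral_congr_ae (ae_of_all _ hpt), integral_add hK2 hGint,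
        integral_sub (integrable_const 1) hK1, integral_const,
        integral_const_mul, hρint, hG1]
      simp
      ring
    have hsq2 : ∫ x, (1 + Real.sqrt (G x)) ^ 2 ∂Λ = 2 + 2 * ρ := by
      have hpt : ∀ x, (1 + Real.sqrt (G x)) ^ 2 = 1 + 2 * Real.sqrt (G x) + G x := by
        intro x
        have := Real.sq_sqrt (hG0 x)
        nlinarith [this]
      have hK1 : Integrable (fun x => 2 * Real.sqrt (G x)) Λ := hsGint.const_mul 2
      have hK2 : Integrable (fun x => 1 + 2 * Real.sqrt (G x)) Λ := (integrable_const 1).add hK1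
      rw [integral_congr_ae (ae_of_all _ hpt), integral_add hK2 hGint,
        integral_add (integrable_const 1) hK1, integral_const,
        integral_const_mul, hρint, hG1]
      simp
      ring
    -- the key L¹ bound
    set t := Real.sqrt 2 / Real.sqrt (c * S) with htdef
    have hcS : 0 < c * S := mul_pos hc hS
    have ht : 0 < t := div_pos (Real.sqrt_pos.2 two_pos) (Real.sqrt_pos.2 hcS)
    have habsint : Integrable (fun x => |1 - G x|) Λ := ((integrable_const 1).sub hGint).abs
    have hbound : ∫ x, |1 - G x| ∂Λ ≤ t * (1 - ρ) + (1 + ρ) / t := by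
      have hmono : ∫ x, |1 - G x| ∂Λ
          ≤ ∫ x, (t / 2 * (1 - Real.sqrt (G x)) ^ 2
              + 1 / (2 * t) * (1 + Real.sqrt (G x)) ^ 2) ∂Λ :=
        integral_mono habsint ((hs1int.const_mul _).add (hs2int.const_mul _))
          (fun x => amgm_pt t (G x) ht (hG0 x))
      have hK1 : Integrable (fun x => t / 2 * (1 - Real.sqrt (G x)) ^ 2) Λ := hs1int.const_mul _
      have hK2 : Integrable (fun x => 1 / (2 * t) * (1 + Real.sqrt (G x)) ^ 2) Λ :=
        hs2int.const_mul _
      rw [integral_add hK1 hK2, integral_const_mul, integral_const_mul, hsq1, hsq2] at hmono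
      have heq : t / 2 * (2 - 2 * ρ) + 1 / (2 * t) * (2 + 2 * ρ)
          = t * (1 - ρ) + (1 + ρ) / t := by
        field_simp
      linarith
    -- final numeric computation
    have hss : Real.sqrt (c * S) * Real.sqrt (c * S) = c * S := Real.mul_self_sqrt hcS.le
    have h22 : Real.sqrt 2 * Real.sqrt 2 = 2 := Real.mul_self_sqrt (by norm_num)
    have hs2pos : (0:ℝ) < Real.sqrt 2 := Real.sqrt_pos.2 two_pos
    have hsspos : (0:ℝ) < Real.sqrt (c * S) := Real.sqrt_pos.2 hcS
    have hkey : Real.sqrt 2 * Real.sqrt (c * S) = (M + 1) * Real.sqrt S := by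
      rw [← Real.sqrt_mul (by norm_num : (0:ℝ) ≤ 2),
        show 2 * (c * S) = (M + 1) ^ 2 * S by rw [hcdef]; ring,
        Real.sqrt_mul (sq_nonneg _), Real.sqrt_sq (by linarith : (0:ℝ) ≤ M + 1)]
    have he1 : t * (c * S) = (M + 1) * Real.sqrt S := by
      rw [htdef, ← hkey, ← hss]
      field_simp
      rw [Real.sqrt_sq (Real.sqrt_nonneg _)]
    have ht2 : t * t * (c * S) = 2 := by
      have htt : t * t = 2 / (c * S) := by
        rw [htdef, div_mul_div_comm, h22, hss]
      rw [htt]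
      field_simp
    have h2div : 2 / t = t * (c * S) := by
      rw [div_eq_iff ht.ne']
      linear_combination -ht2
    -- conclude, set by set
    unfold dTV
    refine ciSup_le ?_
    rintro ⟨A, hA⟩
    rw [hpi]
    have hν_apply : ((Λ.withDensity fun x => ENNReal.ofReal (∏ i, g i (x i))) A).toReal
        = ∫ x, A.indicator G x ∂Λ := by
      rw [wd_apply Λ G hGm hG0 ((M + 1) ^ n) hGB hA,
        ENNReal.toReal_ofReal (integral_nonneg
          (fun x => Set.indicator_nonneg (fun y _ => hG0 y) x))]
    have hμ_apply : (Λ A).toReal = ∫ x, A.indicator (fun _ => (1:ℝ)) x ∂Λ := by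
      rw [integral_indicator_const (1:ℝ) hA]
      simp
      rfl
    rw [hν_apply, hμ_apply,
      ← integral_sub ((integrable_const 1).indicator hA) (hGint.indicator hA)]
    have hindeq : (fun x => A.indicator (fun _ => (1:ℝ)) x - A.indicator G x)
        = fun x => A.indicator (fun y => 1 - G y) x := by
      funext x
      by_cases hx : x ∈ A <;> simp [hx]
    rw [hindeq]
    have hstep1 : |∫ x, A.indicator (fun y => 1 - G y) x ∂Λ|
        ≤ ∫ x, |1 - G x| ∂Λ := by
      have hn := norm_integral_le_integral_norm (μ := Λ)
        (f := fun x => A.indicator (fun y => 1 - G y) x)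
      simp only [Real.norm_eq_abs] at hn
      refine le_trans hn ?_
      refine integral_mono (((integrable_const 1).sub hGint).indicator hA).abs habsint ?_
      intro x
      by_cases hx : x ∈ A <;> simp [hx, abs_nonneg]
    have hstep2 : t * (1 - ρ) + (1 + ρ) / t ≤ t * (c * S) + 2 / t := by
      have h1 : t * (1 - ρ) ≤ t * (c * S) :=
        mul_le_mul_of_nonneg_left (by linarith) ht.le
      have h2 : (1 + ρ) / t ≤ 2 / t :=
        (div_le_div_iff_of_pos_right ht).mpr (by linarith)
      linarith
    have hsqS : 0 ≤ Real.sqrt S := Real.sqrt_nonneg S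
    calc |∫ x, A.indicator (fun y => 1 - G y) x ∂Λ| ≤ ∫ x, |1 - G x| ∂Λ := hstep1
      _ ≤ t * (1 - ρ) + (1 + ρ) / t := hbound
      _ ≤ t * (c * S) + 2 / t := hstep2
      _ = 2 * (M + 1) * Real.sqrt S := by rw [h2div, he1]; ring
      _ ≤ (2 * (M + 1) + 1) * Real.sqrt S := by nlinarith
end

section
/- Consider directed site percolation on ℤ²₊ where each site is open independently with probability p < p⃗_c,site(ℤ²), so that the probability A_k that there exists an open directed path of length k from the origin decays exponentially: P(A_k) ≤ c₁ e^{−c₂ k}. Then there exists ρ > 0 and constants a, b > 0 such that for all n ≥ 1, the probability that some directed path (v₀, v₁, …, vₙ) of length n with ‖v₀‖₁ ≤ n passes through fewer than ρn closed sites is at most a·e^{−bn}. -/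
open MeasureTheory ProbabilityTheory

namespace Stmt14Aux


/-- A directed path condition. -/
def IsPath (γ : ℕ → ℕ × ℕ) (l : ℕ) : Prop :=
  ∀ j < l, γ (j + 1) = γ j + (1, 0) ∨ γ (j + 1) = γ j + (0, 1)

lemma isPath_shift {γ : ℕ → ℕ × ℕ} {l : ℕ} (h : IsPath γ l) (t k : ℕ) (htk : t + k ≤ l) :
    IsPath (fun i => γ (t + i)) k := by
  intro j hj
  have := h (t + j) (by omega)
  simpa [Nat.add_assoc] using this

lemma path_add {γ : ℕ → ℕ × ℕ} {l : ℕ} (h : IsPath γ l) :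
    ∀ i j, i + j ≤ l → ∃ d : ℕ × ℕ, γ (i + j) = γ i + d ∧ d.1 + d.2 = j := by
  intro i j
  induction j with
  | zero => intro _; exact ⟨(0, 0), by simp, by simp⟩
  | succ j ih =>
    intro hle
    obtain ⟨d, hd, hsum⟩ := ih (by omega)
    rcases h (i + j) (by omega) with hs | hs
    · refine ⟨d + (1, 0), ?_, ?_⟩
      · rw [show i + (j + 1) = i + j + 1 by ring, hs, hd, add_assoc]
      · simp [Prod.fst_add, Prod.snd_add] at *; omega
    · refine ⟨d + (0, 1), ?_, ?_⟩
      · rw [show i + (j + 1) = i + j + 1 by ring, hs, hd, add_assoc]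
      · simp [Prod.fst_add, Prod.snd_add] at *; omega

/-- The displacement box. -/
def D (k : ℕ) : Finset (ℕ × ℕ) :=
  (Finset.range (k + 1) ×ˢ Finset.range (k + 1)).filter
    (fun d => 1 ≤ d.1 + d.2 ∧ d.1 + d.2 ≤ k)

/-- Sites possibly visited by a path of length `k` from `v`. -/
def box (k : ℕ) (v : ℕ × ℕ) : Finset (ℕ × ℕ) := (D k).image (v + ·)

lemma mem_box_of_path {γ : ℕ → ℕ × ℕ} {k : ℕ} (h : IsPath γ k) {v : ℕ × ℕ}
    (h0 : γ 0 = v) {i : ℕ} (h1 : 1 ≤ i) (h2 : i ≤ k) : γ i ∈ box k v := by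
  obtain ⟨d, hd, hsum⟩ := path_add h 0 i (by omega)
  simp only [Nat.zero_add, h0] at hd
  refine Finset.mem_image.2 ⟨d, ?_, hd.symm⟩
  simp only [D, Finset.mem_filter, Finset.mem_product, Finset.mem_range]
  omega

lemma box_sum_bounds {k : ℕ} {v w : ℕ × ℕ} (h : w ∈ box k v) :
    v.1 + v.2 + 1 ≤ w.1 + w.2 ∧ w.1 + w.2 ≤ v.1 + v.2 + k ∧ v.1 ≤ w.1 ∧ v.2 ≤ w.2 := by
  obtain ⟨d, hd, rfl⟩ := Finset.mem_image.1 h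
  simp only [D, Finset.mem_filter, Finset.mem_product, Finset.mem_range] at hd
  simp only [Prod.fst_add, Prod.snd_add]
  omega

lemma box_disjoint {k : ℕ} {v w : ℕ × ℕ} (h : v.1 + v.2 + k ≤ w.1 + w.2) :
    Disjoint (box k v) (box k w) := by
  rw [Finset.disjoint_left]
  intro x hx hx'
  have := box_sum_bounds hx
  have := box_sum_bounds hx'
  omega


/-- "There is an open directed path of length `k` from `v`" as a predicate on
configurations. -/
def openPred (k : ℕ) (v : ℕ × ℕ) (σ : ℕ × ℕ → Bool) : Prop :=
  ∃ γ : ℕ → ℕ × ℕ, γ 0 = v ∧ IsPath γ k ∧ ∀ i, 1 ≤ i → i ≤ k → σ (γ i) = true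

lemma openPred_congr {k : ℕ} {v : ℕ × ℕ} {σ σ' : ℕ × ℕ → Bool}
    (h : ∀ w ∈ box k v, σ w = σ' w) : openPred k v σ → openPred k v σ' := by
  rintro ⟨γ, h0, hp, ho⟩
  exact ⟨γ, h0, hp, fun i h1 h2 => (h _ (mem_box_of_path hp h0 h1 h2)).symm ▸ ho i h1 h2⟩

lemma openPred_translate {k : ℕ} {v : ℕ × ℕ} {σ : ℕ × ℕ → Bool} :
    openPred k v σ ↔ openPred k (0, 0) (fun d => σ (v + d)) := by
  constructor
  · rintro ⟨γ, h0, hp, ho⟩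
    have hge : ∀ i ≤ k, v.1 ≤ (γ i).1 ∧ v.2 ≤ (γ i).2 := by
      intro i hi
      obtain ⟨d, hd, -⟩ := path_add hp 0 i (by omega)
      rw [Nat.zero_add] at hd
      rw [hd, h0]
      simp only [Prod.fst_add, Prod.snd_add]
      omega
    refine ⟨fun i => ((γ i).1 - v.1, (γ i).2 - v.2), by simp [h0], ?_, ?_⟩
    · intro j hj
      have hj1 := hge j (by omega)
      rcases hp j hj with hs | hs <;> [left; right] <;>
        · have h1 : (γ (j+1)).1 = (γ j).1 + _ := congrArg Prod.fst hs
          have h2 : (γ (j+1)).2 = (γ j).2 + _ := congrArg Prod.snd hs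
          simp only [Prod.fst_add, Prod.snd_add] at h1 h2
          refine Prod.ext ?_ ?_ <;> simp only [Prod.fst_add, Prod.snd_add, h1, h2] <;> omega
    · intro i h1 h2
      have hgi := hge i (by omega)
      have : v + (((γ i).1 - v.1, (γ i).2 - v.2) : ℕ × ℕ) = γ i := by
        refine Prod.ext ?_ ?_ <;> simp only [Prod.fst_add, Prod.snd_add] <;> omega
      simpa [this] using ho i h1 h2
  · rintro ⟨γ, h0, hp, ho⟩
    refine ⟨fun i => v + γ i, by simp [h0], ?_, fun i h1 h2 => ho i h1 h2⟩
    intro j hj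
    rcases hp j hj with hs | hs <;> [left; right] <;> show v + γ (j+1) = v + γ j + _ <;> rw [hs, add_assoc]


def OpenFrom {Ω : Type*} (X : ℕ × ℕ → Ω → Bool) (k : ℕ) (v : ℕ × ℕ) : Set Ω :=
  {ω | openPred k v (fun w => X w ω)}

variable {Ω : Type*} [MeasurableSpace Ω] (P : Measure Ω) [IsProbabilityMeasure P]
  (X : ℕ × ℕ → Ω → Bool)

lemma prob_false (hmeas : ∀ v, Measurable (X v)) {p : ENNReal}
    (hid : ∀ v, P {ω | X v ω = true} = p) (w : ℕ × ℕ) :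
    P {ω | X w ω = false} = 1 - p := by
  have h1 : {ω | X w ω = false} = {ω | X w ω = true}ᶜ := by
    ext ω
    simp only [Set.mem_setOf_eq, Set.mem_compl_iff]
    constructor
    · intro h; simp [h]
    · intro h; simpa using h
  have h2 : MeasurableSet {ω | X w ω = true} := (hmeas w) (measurableSet_singleton true)
  rw [h1, measure_compl h2 (measure_ne_top _ _), measure_univ, hid]

/-- The cylinder event: the configuration on the box `v + D k` is given by `A`. -/
def cylEvt (k : ℕ) (v : ℕ × ℕ) (A : Finset (ℕ × ℕ)) : Set Ω :=
  {ω | ∀ d ∈ D k, X (v + d) ω = decide (d ∈ A)}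

lemma cylEvt_measurable (hmeas : ∀ v, Measurable (X v)) (k : ℕ) (v : ℕ × ℕ)
    (A : Finset (ℕ × ℕ)) : MeasurableSet (cylEvt X k v A) := by
  have : cylEvt X k v A = ⋂ d ∈ D k, (X (v + d)) ⁻¹' {decide (d ∈ A)} := by
    ext ω; simp [cylEvt]
  rw [this]
  exact MeasurableSet.biInter (Finset.countable_toSet _)
    (fun d _ => (hmeas _) (measurableSet_singleton _))

lemma cylEvt_prob (hmeas : ∀ v, Measurable (X v))
    (hindep : iIndepFun X P)
    {p : ENNReal} (hid : ∀ v, P {ω | X v ω = true} = p) (k : ℕ) (v : ℕ × ℕ)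
    (A : Finset (ℕ × ℕ)) :
    P (cylEvt X k v A) = ∏ d ∈ D k, (if d ∈ A then p else 1 - p) := by
  classical
  have hinj : Function.Injective (v + ·) := fun a b h => by
    simpa using add_right_injective v h
  -- the per-site prescribed value
  set σ : ℕ × ℕ → Bool := fun w => decide ((w.1 - v.1, w.2 - v.2) ∈ A) with hσ
  have hσv : ∀ d : ℕ × ℕ, σ (v + d) = decide (d ∈ A) := by
    intro d; simp [hσ, Prod.fst_add, Prod.snd_add]
  have hmul := hindep.measure_inter_preimage_eq_mul (S := box k v)
    (sets := fun w => {σ w}) (fun i _ => measurableSet_singleton _)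
  have hset : (⋂ w ∈ box k v, X w ⁻¹' {σ w}) = cylEvt X k v A := by
    ext ω
    simp only [Set.mem_iInter, Set.mem_preimage, Set.mem_singleton_iff, cylEvt,
      Set.mem_setOf_eq, box, Finset.mem_image]
    constructor
    · intro h d hd
      rw [← hσv d]; exact h _ ⟨d, hd, rfl⟩
    · rintro h w ⟨d, hd, rfl⟩
      rw [hσv d]; exact h d hd
  rw [hset] at hmul
  rw [hmul, box, Finset.prod_image (fun a _ b _ h => hinj h)]
  refine Finset.prod_congr rfl (fun d _ => ?_)
  have : X (v + d) ⁻¹' {σ (v + d)} = {ω | X (v + d) ω = σ (v + d)} := rfl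
  rw [this, hσv d]
  by_cases hdA : d ∈ A
  · simp [hdA, hid]
  · simp only [hdA, decide_eq_false hdA, if_false]
    exact prob_false P X hmeas hid _

/-- The predicate on configuration subsets of `D k`. -/
def Qk (k : ℕ) (A : Finset (ℕ × ℕ)) : Prop :=
  openPred k (0, 0) (fun d => decide (d ∈ A))

noncomputable instance (k : ℕ) : DecidablePred (Qk k) := fun _ => Classical.propDecidable _

lemma openFrom_eq_biUnion (k : ℕ) (v : ℕ × ℕ) :
    OpenFrom X k v = ⋃ A ∈ ((D k).powerset.filter (Qk k)), cylEvt X k v A := by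
  classical
  ext ω
  simp only [OpenFrom, Set.mem_setOf_eq, Set.mem_iUnion, Finset.mem_filter,
    Finset.mem_powerset, exists_prop]
  constructor
  · intro h
    refine ⟨(D k).filter (fun d => X (v + d) ω = true), ⟨Finset.filter_subset _ _, ?_⟩, ?_⟩
    · -- Qk holds
      have h0 : openPred k (0, 0) (fun d => X (v + d) ω) := openPred_translate.1 h
      refine openPred_congr (fun w hw => ?_) h0
      have hwD : w ∈ D k := by simp [box] at hw; obtain ⟨a, b, h, rfl⟩ := hw; exact h
      simp [hwD]
    · intro d hd; simp [hd]
  · rintro ⟨A, ⟨hA, hQ⟩, hc⟩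
    rw [show v = v from rfl]
    apply openPred_translate.2
    refine openPred_congr (fun w hw => ?_) hQ
    have hwD : w ∈ D k := by simp [box] at hw; obtain ⟨a, b, h, rfl⟩ := hw; exact h
    simp [hc w hwD]

lemma openFrom_prob_eq (hmeas : ∀ v, Measurable (X v))
    (hindep : iIndepFun X P)
    {p : ENNReal} (hid : ∀ v, P {ω | X v ω = true} = p) (k : ℕ) (v : ℕ × ℕ) :
    P (OpenFrom X k v) = P (OpenFrom X k (0, 0)) := by
  classical
  have key : ∀ w : ℕ × ℕ, P (OpenFrom X k w)
      = ∑ A ∈ ((D k).powerset.filter (Qk k)), ∏ d ∈ D k, (if d ∈ A then p else 1 - p) := by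
    intro w
    rw [openFrom_eq_biUnion X k w, measure_biUnion_finset ?hd
      (fun A _ => cylEvt_measurable X hmeas k w A)]
    · exact Finset.sum_congr rfl (fun A _ => cylEvt_prob P X hmeas hindep hid k w A)
    case hd =>
      intro A hA B hB hAB
      simp only [Finset.coe_filter, Set.mem_setOf_eq, Finset.mem_powerset] at hA hB
      refine Set.disjoint_left.2 (fun ω hωA hωB => ?_)
      apply hAB
      ext d
      by_cases hd : d ∈ D k
      · have h1 := hωA d hd
        have h2 := hωB d hd
        rw [h1] at h2
        constructor <;> intro hmem <;> simp_all
      · constructor <;> intro hmem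
        · exact absurd (hA.1 hmem) hd
        · exact absurd (hB.1 hmem) hd
  rw [key v, key (0, 0)]


lemma measurableSet_boolPi {ι : Type*} [Finite ι] (A : Set (ι → Bool)) :
    MeasurableSet A := by
  have hsing : ∀ g : ι → Bool, MeasurableSet {g} := by
    intro g
    have : {g} = ⋂ i, (fun f : ι → Bool => f i) ⁻¹' {g i} := by
      ext f
      simp [Set.mem_iInter, funext_iff]
    rw [this]
    exact MeasurableSet.iInter fun i =>
      (measurable_pi_apply i) (measurableSet_singleton _)
  have : A = ⋃ g ∈ A, {g} := by simp
  rw [this]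
  exact MeasurableSet.biUnion A.to_countable fun g _ => hsing g

/-- Restriction of a configuration to a finset, extended by `false`. -/
noncomputable def extOf (U : Finset (ℕ × ℕ)) (g : {w : ℕ × ℕ // w ∈ U} → Bool) :
    ℕ × ℕ → Bool := fun w => if h : w ∈ U then g ⟨w, h⟩ else false

lemma openFrom_preimage (k : ℕ) (v : ℕ × ℕ) (U : Finset (ℕ × ℕ)) (hU : box k v ⊆ U) :
    OpenFrom X k v
      = (fun ω (w : {w : ℕ × ℕ // w ∈ U}) => X w.1 ω) ⁻¹'
        {g | openPred k v (extOf U g)} := by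
  ext ω
  simp only [OpenFrom, Set.mem_setOf_eq, Set.mem_preimage]
  constructor
  · refine fun h => openPred_congr (fun w hw => ?_) h
    have hwU : w ∈ U := hU hw
    simp [extOf, hwU]
  · refine fun h => openPred_congr (fun w hw => ?_) h
    have hwU : w ∈ U := hU hw
    simp [extOf, hwU]

lemma blocks_indep (hmeas : ∀ v, Measurable (X v))
    (hindep : iIndepFun X P)
    (k : ℕ) {ι : Type*} [DecidableEq ι] (T : Finset ι) (u : ι → ℕ × ℕ)
    (hdisj : (T : Set ι).Pairwise fun i j => Disjoint (box k (u i)) (box k (u j))) :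
    P (⋂ j ∈ T, OpenFrom X k (u j)) = ∏ j ∈ T, P (OpenFrom X k (u j)) := by
  classical
  induction T using Finset.induction_on with
  | empty => simp
  | @insert i T hiT ih =>
    have hdisj' : (T : Set ι).Pairwise fun i j => Disjoint (box k (u i)) (box k (u j)) :=
      hdisj.mono (by simp [Set.subset_insert])
    set U₂ : Finset (ℕ × ℕ) := T.biUnion (fun j => box k (u j)) with hU₂
    have hd : Disjoint (box k (u i)) U₂ := by
      rw [hU₂, Finset.disjoint_biUnion_right]
      intro j hj
      exact hdisj (by simp) (by simp [hj]) (fun h => hiT (h ▸ hj))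
    have hIF := hindep.indepFun_finset (box k (u i)) U₂ hd hmeas
    have hmul := hIF.measure_inter_preimage_eq_mul
      (s := {g | openPred k (u i) (extOf (box k (u i)) g)})
      (t := ⋂ j ∈ T, {g | openPred k (u j) (extOf U₂ g)})
      (measurableSet_boolPi _) (measurableSet_boolPi _)
    have h1 : OpenFrom X k (u i)
        = (fun ω (w : {w : ℕ × ℕ // w ∈ box k (u i)}) => X w.1 ω) ⁻¹'
          {g | openPred k (u i) (extOf (box k (u i)) g)} :=
      openFrom_preimage X k (u i) _ subset_rfl
    have h2 : (⋂ j ∈ T, OpenFrom X k (u j))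
        = (fun ω (w : {w : ℕ × ℕ // w ∈ U₂}) => X w.1 ω) ⁻¹'
          (⋂ j ∈ T, {g | openPred k (u j) (extOf U₂ g)}) := by
      rw [Set.preimage_iInter₂]
      exact Set.iInter₂_congr fun j hj =>
        openFrom_preimage X k (u j) U₂ (Finset.subset_biUnion_of_mem (fun j => box k (u j)) hj)
    rw [Finset.set_biInter_insert, Finset.prod_insert hiT, ← ih hdisj', h1, h2, hmul]

/-- Partial sums of the first-coordinate block displacements. -/
def Sd {k m : ℕ} (d : Fin m → Fin (k + 1)) (j : ℕ) : ℕ :=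
  ∑ i ∈ Finset.range j, (if h : i < m then (d ⟨i, h⟩ : ℕ) else 0)

/-- The start site of block `j`. -/
def usite (k m : ℕ) (v : ℕ × ℕ) (d : Fin m → Fin (k + 1)) (j : ℕ) : ℕ × ℕ :=
  (v.1 + Sd d j, v.2 + (j * k - Sd d j))

lemma Sd_le {k m : ℕ} (d : Fin m → Fin (k + 1)) (j : ℕ) : Sd d j ≤ j * k := by
  calc Sd d j ≤ ∑ _i ∈ Finset.range j, k := by
        refine Finset.sum_le_sum fun i _ => ?_
        split
        · exact Nat.lt_succ_iff.1 (Fin.is_lt _)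
        · exact Nat.zero_le _
    _ = j * k := by simp [Finset.sum_const, Nat.mul_comm]

lemma usite_sum {k m : ℕ} (v : ℕ × ℕ) (d : Fin m → Fin (k + 1)) (j : ℕ) :
    (usite k m v d j).1 + (usite k m v d j).2 = v.1 + v.2 + j * k := by
  have := Sd_le d j
  simp only [usite]
  omega

theorem cover {Ω : Type*} {k n : ℕ} (hk : 1 ≤ k) (X : ℕ × ℕ → Ω → Bool) (ω : Ω)
    (γ : ℕ → ℕ × ℕ) (hv : (γ 0).1 + (γ 0).2 ≤ n) (hp : IsPath γ n)
    (hcard : 4 * k * (((Finset.Icc 1 n).filter (fun i => X (γ i) ω = false)).card) < n) :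
    ∃ v : ℕ × ℕ, v.1 + v.2 ≤ n ∧ ∃ d : Fin (n / k) → Fin (k + 1),
      ∃ T : Finset (Fin (n / k)), T.card = n / k - (n / k) / 2 ∧
        ∀ j ∈ T, ω ∈ OpenFrom X k (usite k (n / k) v d (j : ℕ)) := by
  classical
  set m := n / k with hm
  set v := γ 0 with hv0
  have hkpos : 0 < k := hk
  have hblock : ∀ j : ℕ, j < m → (j + 1) * k ≤ n := by
    intro j hj
    have : j + 1 ≤ m := hj
    rw [hm] at this
    exact (Nat.le_div_iff_mul_le hkpos).1 this
  -- the block displacement data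
  have hdlt : ∀ j : ℕ, j < m → (γ ((j + 1) * k)).1 - (γ (j * k)).1 < k + 1 := by
    intro j hj
    obtain ⟨e, he, hesum⟩ := path_add hp (j * k) k
      (by have h := hblock j hj; have : (j + 1) * k = j * k + k := (by ring); omega)
    have h1 : (γ (j * k + k)).1 = (γ (j * k)).1 + e.1 := by rw [he]; rfl
    have : (j + 1) * k = j * k + k := by ring
    rw [this, h1]
    omega
  set d : Fin m → Fin (k + 1) := fun j =>
    ⟨(γ ((j + 1) * k)).1 - (γ ((j : ℕ) * k)).1, hdlt j j.isLt⟩ with hd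
  -- block starts are as prescribed
  have hstart : ∀ j : ℕ, j ≤ m → γ (j * k) = usite k m v d j := by
    intro j
    induction j with
    | zero => intro _; simp [usite, Sd, hv0]
    | succ j ih =>
      intro hj
      have hjm : j < m := hj
      have huj := ih (le_of_lt hjm)
      obtain ⟨e, he, hesum⟩ := path_add hp (j * k) k
        (by have h := hblock j hjm; have : (j + 1) * k = j * k + k := (by ring); omega)
      have hjk : (j + 1) * k = j * k + k := by ring
      have h1 : (γ ((j + 1) * k)).1 = (γ (j * k)).1 + e.1 := by rw [hjk, he]; rfl
      have h2 : (γ ((j + 1) * k)).2 = (γ (j * k)).2 + e.2 := by rw [hjk, he]; rfl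
      have hSd : Sd d (j + 1) = Sd d j + ((γ ((j + 1) * k)).1 - (γ (j * k)).1) := by
        rw [Sd, Finset.sum_range_succ]
        simp only [hjm, dif_pos]
        rfl
      have hu1 : (γ (j * k)).1 = v.1 + Sd d j := congrArg Prod.fst huj
      have hu2 : (γ (j * k)).2 = v.2 + (j * k - Sd d j) := congrArg Prod.snd huj
      have hSle := Sd_le d j
      refine Prod.ext ?_ ?_ <;> simp only [usite]
      · rw [h1, hSd, hu1]; omega
      · rw [h2, hSd, hu2]; omega
  -- bad blocks
  set Bad : Finset (Fin m) := Finset.univ.filter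
    (fun j : Fin m => ∃ i, (j : ℕ) * k + 1 ≤ i ∧ i ≤ ((j : ℕ) + 1) * k ∧ X (γ i) ω = false)
    with hBad
  set Cl : Finset ℕ := (Finset.Icc 1 n).filter (fun i => X (γ i) ω = false) with hCl
  have hBadCl : Bad.card ≤ Cl.card := by
    set w : Fin m → ℕ := fun j =>
      if h : ∃ i, (j : ℕ) * k + 1 ≤ i ∧ i ≤ ((j : ℕ) + 1) * k ∧ X (γ i) ω = false
      then h.choose else 0 with hw
    have hwspec : ∀ j ∈ Bad, (j : ℕ) * k + 1 ≤ w j ∧ w j ≤ ((j : ℕ) + 1) * k ∧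
        X (γ (w j)) ω = false := by
      intro j hj
      rw [hBad, Finset.mem_filter] at hj
      rw [hw]
      simp only [hj.2, dif_pos]
      exact hj.2.choose_spec
    refine Finset.card_le_card_of_injOn w (fun j hj => ?_) (fun j hj j' hj' hjj' => ?_)
    · obtain ⟨h1, h2, h3⟩ := hwspec j hj
      rw [hCl, Finset.mem_coe, Finset.mem_filter, Finset.mem_Icc]
      have := hblock j j.isLt
      exact ⟨⟨by omega, by omega⟩, h3⟩
    · obtain ⟨a1, a2, -⟩ := hwspec j hj
      obtain ⟨b1, b2, -⟩ := hwspec j' hj'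
      have : (j : ℕ) = (j' : ℕ) := by
        rcases Nat.lt_trichotomy (j : ℕ) (j' : ℕ) with h | h | h
        · exfalso
          have : ((j : ℕ) + 1) * k ≤ (j' : ℕ) * k := Nat.mul_le_mul_right k (by omega)
          omega
        · exact h
        · exfalso
          have : ((j' : ℕ) + 1) * k ≤ (j : ℕ) * k := Nat.mul_le_mul_right k (by omega)
          omega
      exact Fin.ext this
  have hBadHalf : Bad.card ≤ m / 2 := by
    have h1 : Bad.card * (4 * k) ≤ n := by
      calc Bad.card * (4 * k) ≤ Cl.card * (4 * k) := Nat.mul_le_mul_right _ hBadCl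
        _ = 4 * k * Cl.card := by ring
        _ ≤ n := le_of_lt hcard
    have h2 : Bad.card ≤ n / (4 * k) := (Nat.le_div_iff_mul_le (by omega)).2 h1
    have h3 : n / (4 * k) ≤ n / (2 * k) := Nat.div_le_div_left (by omega) (by omega)
    have h4 : n / (2 * k) = m / 2 := by
      rw [hm, Nat.div_div_eq_div_mul, Nat.mul_comm]
    omega
  -- good blocks
  set Good : Finset (Fin m) := Finset.univ \ Bad with hGood
  have hGoodCard : m - m / 2 ≤ Good.card := by
    rw [hGood, Finset.card_sdiff_of_subset (Finset.subset_univ _)]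
    simp only [Finset.card_univ, Fintype.card_fin]
    omega
  obtain ⟨T, hTsub, hTcard⟩ := Finset.exists_subset_card_eq hGoodCard
  refine ⟨v, hv, d, T, hTcard, fun j hj => ?_⟩
  have hjGood := hTsub hj
  rw [hGood, Finset.mem_sdiff, hBad, Finset.mem_filter] at hjGood
  have hopen : ∀ i, (j : ℕ) * k + 1 ≤ i → i ≤ ((j : ℕ) + 1) * k → X (γ i) ω = true := by
    intro i h1 h2
    by_contra hfalse
    exact hjGood.2 ⟨Finset.mem_univ _, ⟨i, h1, h2, by simpa using hfalse⟩⟩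
  refine ⟨fun i => γ ((j : ℕ) * k + i), ?_, ?_, ?_⟩
  · simp only [Nat.add_zero]
    exact hstart j (le_of_lt j.isLt)
  · refine isPath_shift hp _ _ ?_
    have h := hblock (j : ℕ) j.isLt
    have : ((j : ℕ) + 1) * k = (j : ℕ) * k + k := by ring
    omega
  · intro i h1 h2
    have hjj : ((j : ℕ) + 1) * k = (j : ℕ) * k + k := by ring
    exact hopen _ (by omega) (by omega)



lemma cube_le_exp {x : ℝ} (hx : 0 ≤ x) : (x / 3) ^ 3 ≤ Real.exp x := by
  have h1 : x / 3 ≤ Real.exp (x / 3) := by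
    have := Real.add_one_le_exp (x / 3)
    linarith
  calc (x / 3) ^ 3 ≤ (Real.exp (x / 3)) ^ 3 := by
        apply pow_le_pow_left₀ (by positivity) h1
    _ = Real.exp x := by
        rw [← Real.exp_nat_mul]
        congr 1
        push_cast
        ring
  
lemma choose_k {c₁ c₂ : ℝ} (hc₁ : 0 < c₁) (hc₂ : 0 < c₂) :
    ∃ k : ℕ, 1 ≤ k ∧ (2 * ((k : ℝ) + 1)) ^ 2 * (c₁ * Real.exp (-c₂ * k)) ≤ Real.exp (-4) := by
  set k : ℕ := max 1 ⌈432 * c₁ * Real.exp 4 / c₂ ^ 3⌉₊ with hk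
  refine ⟨k, le_max_left _ _, ?_⟩
  have hk1 : (1 : ℝ) ≤ k := by exact_mod_cast le_max_left 1 _
  have hkc : 432 * c₁ * Real.exp 4 / c₂ ^ 3 ≤ (k : ℝ) :=
    le_trans (Nat.le_ceil _) (by exact_mod_cast le_max_right 1 _)
  have hA : 432 * (c₁ * Real.exp 4) ≤ c₂ ^ 3 * k := by
    rw [div_le_iff₀ (by positivity)] at hkc
    nlinarith [hkc]
  have key : (2 * ((k : ℝ) + 1)) ^ 2 * c₁ * Real.exp 4 ≤ Real.exp (c₂ * k) := by
    have h2 : (2 * ((k : ℝ) + 1)) ^ 2 ≤ 16 * (k : ℝ) ^ 2 := by nlinarith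
    have h3 : (c₂ * k / 3) ^ 3 ≤ Real.exp (c₂ * k) := cube_le_exp (by positivity)
    have h4 : (2 * ((k : ℝ) + 1)) ^ 2 * c₁ * Real.exp 4 ≤ (c₂ * k / 3) ^ 3 := by
      have h5 : (c₂ * k / 3) ^ 3 = c₂ ^ 3 * k * k ^ 2 / 27 := by ring
      rw [h5]
      have h6 : (2 * ((k : ℝ) + 1)) ^ 2 * c₁ * Real.exp 4
          ≤ 16 * (k : ℝ) ^ 2 * (c₁ * Real.exp 4) := by
        have := Real.exp_pos (4 : ℝ)
        nlinarith [mul_le_mul_of_nonneg_right h2 (le_of_lt (mul_pos hc₁ this))]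
      refine h6.trans ?_
      have h7 : 16 * (c₁ * Real.exp 4) ≤ c₂ ^ 3 * k / 27 := by linarith
      have h8 : (0 : ℝ) ≤ (k : ℝ) ^ 2 := by positivity
      calc 16 * (k : ℝ) ^ 2 * (c₁ * Real.exp 4)
          = (k : ℝ) ^ 2 * (16 * (c₁ * Real.exp 4)) := by ring
        _ ≤ (k : ℝ) ^ 2 * (c₂ ^ 3 * k / 27) := by
            exact mul_le_mul_of_nonneg_left h7 h8
        _ = c₂ ^ 3 * k * k ^ 2 / 27 := by ring
    exact h4.trans h3
  have hfin : (2 * ((k : ℝ) + 1)) ^ 2 * c₁ ≤ Real.exp (c₂ * k - 4) := by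
    have h9 : Real.exp (c₂ * k - 4) = Real.exp (c₂ * k) * Real.exp (-4) := by
      rw [← Real.exp_add]; ring_nf
    have h10 := mul_le_mul_of_nonneg_right key (le_of_lt (Real.exp_pos (-4)))
    have h11 : Real.exp 4 * Real.exp (-4) = 1 := by
      rw [← Real.exp_add]; norm_num
    calc (2 * ((k : ℝ) + 1)) ^ 2 * c₁
        = (2 * ((k : ℝ) + 1)) ^ 2 * c₁ * (Real.exp 4 * Real.exp (-4)) := by
          rw [h11]; ring
      _ = (2 * ((k : ℝ) + 1)) ^ 2 * c₁ * Real.exp 4 * Real.exp (-4) := by ring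
      _ ≤ Real.exp (c₂ * k) * Real.exp (-4) := h10
      _ = Real.exp (c₂ * k - 4) := h9.symm
  calc (2 * ((k : ℝ) + 1)) ^ 2 * (c₁ * Real.exp (-c₂ * k))
      = ((2 * ((k : ℝ) + 1)) ^ 2 * c₁) * Real.exp (-c₂ * k) := by ring
    _ ≤ Real.exp (c₂ * k - 4) * Real.exp (-c₂ * k) := by
        exact mul_le_mul_of_nonneg_right hfin (le_of_lt (Real.exp_pos _))
    _ = Real.exp (-4) := by rw [← Real.exp_add]; ring_nf

lemma arith {k n : ℕ} (hk : 1 ≤ k) (hn : 1 ≤ n) {ε : ℝ} (hε0 : 0 ≤ ε)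
    (hεk : (2 * ((k : ℝ) + 1)) ^ 2 * ε ≤ Real.exp (-4)) :
    ((n : ℝ) + 1) ^ 2 * (((k : ℝ) + 1) ^ (n / k) * 2 ^ (n / k) * ε ^ (n / k - (n / k) / 2))
      ≤ (108 * (k : ℝ) ^ 3 * Real.exp 2) * Real.exp (-(1 / (k : ℝ)) * n) := by
  set m := n / k with hm
  set q := m - m / 2 with hq
  have hm2q : m ≤ 2 * q := by omega
  have hkR : (1 : ℝ) ≤ (k : ℝ) := by exact_mod_cast hk
  have hbase : (1 : ℝ) ≤ 2 * ((k : ℝ) + 1) := by linarith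
  -- step 1 : (k+1)^m * 2^m * ε^q ≤ exp (-2 m)
  have step1 : ((k : ℝ) + 1) ^ m * 2 ^ m * ε ^ q ≤ Real.exp (-2 * m) := by
    have h1 : ((k : ℝ) + 1) ^ m * 2 ^ m = (2 * ((k : ℝ) + 1)) ^ m := by
      rw [mul_pow]; ring
    have h2 : (2 * ((k : ℝ) + 1)) ^ m ≤ (2 * ((k : ℝ) + 1)) ^ (2 * q) :=
      pow_le_pow_right₀ hbase hm2q
    have h3 : ((k : ℝ) + 1) ^ m * 2 ^ m * ε ^ q ≤ ((2 * ((k : ℝ) + 1)) ^ 2 * ε) ^ q := by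
      rw [h1]
      calc (2 * ((k : ℝ) + 1)) ^ m * ε ^ q ≤ ((2 * ((k : ℝ) + 1)) ^ 2) ^ q * ε ^ q := by
            refine mul_le_mul_of_nonneg_right ?_ (pow_nonneg hε0 q)
            rw [← pow_mul]
            exact h2
        _ = ((2 * ((k : ℝ) + 1)) ^ 2 * ε) ^ q := by rw [mul_pow ((2 * ((k : ℝ) + 1)) ^ 2) ε q]
    refine h3.trans ?_
    have h4 : ((2 * ((k : ℝ) + 1)) ^ 2 * ε) ^ q ≤ (Real.exp (-4)) ^ q :=
      pow_le_pow_left₀ (by positivity) hεk q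
    refine h4.trans ?_
    rw [← Real.exp_nat_mul]
    apply Real.exp_le_exp.2
    have : (m : ℝ) ≤ 2 * q := by exact_mod_cast hm2q
    nlinarith
  -- step 2 : exp (-2 m) ≤ exp 2 * exp (-(2/k) n)
  have hnm : (n : ℝ) < ((m : ℝ) + 1) * k := by
    have h : n < (m + 1) * k := (Nat.div_lt_iff_lt_mul hk).1 (by omega)
    exact_mod_cast h
  have step2 : Real.exp (-2 * (m : ℝ)) ≤ Real.exp 2 * Real.exp (-(2 / (k : ℝ)) * n) := by
    rw [← Real.exp_add]
    apply Real.exp_le_exp.2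
    have hkpos : (0 : ℝ) < (k : ℝ) := by linarith
    have h1 : (n : ℝ) / k ≤ (m : ℝ) + 1 := by
      rw [div_le_iff₀ hkpos]
      linarith
    have h2 : (2 / (k : ℝ)) * n = 2 * ((n : ℝ) / k) := by ring
    have h3 : -(2 / (k : ℝ)) * n = -(2 * ((n : ℝ) / k)) := by ring
    rw [h3]
    nlinarith [h1]
  -- step 3 : (n+1)^2 ≤ 108 k^3 exp (n/k)
  have step3 : ((n : ℝ) + 1) ^ 2 ≤ 108 * (k : ℝ) ^ 3 * Real.exp ((1 / (k : ℝ)) * n) := by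
    have hkpos : (0 : ℝ) < (k : ℝ) := by linarith
    have hnR : (1 : ℝ) ≤ (n : ℝ) := by exact_mod_cast hn
    have h1 : ((1 / (k : ℝ)) * n / 3) ^ 3 ≤ Real.exp ((1 / (k : ℝ)) * n) :=
      cube_le_exp (by positivity)
    have hk0 : (k : ℝ) ≠ 0 := by linarith
    have h2 : ((1 / (k : ℝ)) * n / 3) ^ 3 = (n : ℝ) ^ 3 / (27 * (k : ℝ) ^ 3) := by
      field_simp
      ring
    have h3 : 108 * (k : ℝ) ^ 3 * ((n : ℝ) ^ 3 / (27 * (k : ℝ) ^ 3)) = 4 * (n : ℝ) ^ 3 := by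
      field_simp
      ring
    have e1 : (n : ℝ) ^ 2 ≤ (n : ℝ) ^ 3 := pow_le_pow_right₀ hnR (by norm_num)
    have e2 : (n : ℝ) ^ 1 ≤ (n : ℝ) ^ 3 := pow_le_pow_right₀ hnR (by norm_num)
    have e3 : (1 : ℝ) ≤ (n : ℝ) ^ 3 := one_le_pow₀ hnR
    have h4 : ((n : ℝ) + 1) ^ 2 ≤ 4 * (n : ℝ) ^ 3 := by
      have : (n : ℝ) ^ 1 = (n : ℝ) := pow_one _
      nlinarith [e1, e2, e3]
    calc ((n : ℝ) + 1) ^ 2 ≤ 4 * (n : ℝ) ^ 3 := h4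
      _ = 108 * (k : ℝ) ^ 3 * ((n : ℝ) ^ 3 / (27 * (k : ℝ) ^ 3)) := h3.symm
      _ ≤ 108 * (k : ℝ) ^ 3 * Real.exp ((1 / (k : ℝ)) * n) := by
          rw [← h2]
          refine mul_le_mul_of_nonneg_left h1 (by positivity)
  -- combine
  calc ((n : ℝ) + 1) ^ 2 * (((k : ℝ) + 1) ^ m * 2 ^ m * ε ^ q)
      ≤ (108 * (k : ℝ) ^ 3 * Real.exp ((1 / (k : ℝ)) * n)) * Real.exp (-2 * m) := by
        refine mul_le_mul step3 step1 (by positivity) (by positivity)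
    _ ≤ (108 * (k : ℝ) ^ 3 * Real.exp ((1 / (k : ℝ)) * n))
          * (Real.exp 2 * Real.exp (-(2 / (k : ℝ)) * n)) := by
        refine mul_le_mul_of_nonneg_left step2 (by positivity)
    _ = (108 * (k : ℝ) ^ 3 * Real.exp 2)
          * (Real.exp ((1 / (k : ℝ)) * n) * Real.exp (-(2 / (k : ℝ)) * n)) := by ring
    _ = (108 * (k : ℝ) ^ 3 * Real.exp 2) * Real.exp (-(1 / (k : ℝ)) * n) := by
        rw [← Real.exp_add]
        congr 1
        ring

end Stmt14Aux

open Stmt14Aux in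
/-- Directed site percolation on `ℤ²₊`: sites are open (`X v = true`)
independently with probability `p`, subcritical in the sense that the
probability of an open directed path of length `k` from the origin decays
exponentially: `P(A_k) ≤ c₁ e^{-c₂ k}`.  Then there exist `ρ > 0` and
`a, b > 0` such that for all `n ≥ 1`, the probability that some directed path
`(v₀,…,vₙ)` with `‖v₀‖₁ ≤ n` passes through fewer than `ρ n` closed sites is
at most `a e^{-b n}`. -/
theorem stmt14 {Ω : Type*} [MeasurableSpace Ω] (P : Measure Ω) [IsProbabilityMeasure P]
    (X : ℕ × ℕ → Ω → Bool) (hmeas : ∀ v, Measurable (X v))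
    (hindep : iIndepFun X P)
    (p : ENNReal) (hid : ∀ v, P {ω | X v ω = true} = p)
    (c₁ c₂ : ℝ) (hc₁ : 0 < c₁) (hc₂ : 0 < c₂)
    (hA : ∀ k : ℕ,
      (P {ω | ∃ γ : ℕ → ℕ × ℕ, γ 0 = (0, 0) ∧
          (∀ j < k, γ (j + 1) = γ j + (1, 0) ∨ γ (j + 1) = γ j + (0, 1)) ∧
          (∀ i, 1 ≤ i → i ≤ k → X (γ i) ω = true)}).toReal
        ≤ c₁ * Real.exp (-c₂ * k)) :
    ∃ ρ : ℝ, 0 < ρ ∧ ∃ a b : ℝ, 0 < a ∧ 0 < b ∧ ∀ n : ℕ, 1 ≤ n →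
      (P {ω | ∃ γ : ℕ → ℕ × ℕ,
          ((γ 0).1 + (γ 0).2 : ℝ) ≤ n ∧
          (∀ j < n, γ (j + 1) = γ j + (1, 0) ∨ γ (j + 1) = γ j + (0, 1)) ∧
          (((Finset.Icc 1 n).filter (fun i => X (γ i) ω = false)).card : ℝ) < ρ * n}).toReal
        ≤ a * Real.exp (-b * n) := by
  classical
  obtain ⟨k, hk1, hεk⟩ := choose_k hc₁ hc₂
  set ε : ℝ := c₁ * Real.exp (-c₂ * k) with hε
  have hε0 : 0 ≤ ε := by positivity
  have hkR : (1 : ℝ) ≤ (k : ℝ) := by exact_mod_cast hk1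
  refine ⟨1 / (4 * (k : ℝ)), by positivity, 108 * (k : ℝ) ^ 3 * Real.exp 2, 1 / (k : ℝ),
    by positivity, by positivity, fun n hn => ?_⟩
  set m := n / k with hm
  set q := m - m / 2 with hq
  -- the probability of a single block event
  set P₀ : ENNReal := P (OpenFrom X k (0, 0)) with hP₀
  have hP₀ε : P₀ ≤ ENNReal.ofReal ε := by
    refine (ENNReal.le_ofReal_iff_toReal_le (measure_ne_top _ _) hε0).2 ?_
    exact hA k
  -- index sets
  set V : Finset (ℕ × ℕ) :=
    (Finset.range (n + 1) ×ˢ Finset.range (n + 1)).filter (fun v => v.1 + v.2 ≤ n) with hV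
  set I : Finset ((ℕ × ℕ) × (Fin m → Fin (k + 1)) × Finset (Fin m)) :=
    V ×ˢ ((Finset.univ : Finset (Fin m → Fin (k + 1))) ×ˢ
      (Finset.univ.filter (fun T : Finset (Fin m) => T.card = q))) with hI
  set G : (ℕ × ℕ) × (Fin m → Fin (k + 1)) × Finset (Fin m) → Set Ω :=
    fun t => ⋂ j ∈ t.2.2, OpenFrom X k (usite k m t.1 t.2.1 (j : ℕ)) with hG
  -- covering
  have hcover : {ω : Ω | ∃ γ : ℕ → ℕ × ℕ,
      ((γ 0).1 + (γ 0).2 : ℝ) ≤ n ∧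
      (∀ j < n, γ (j + 1) = γ j + (1, 0) ∨ γ (j + 1) = γ j + (0, 1)) ∧
      (((Finset.Icc 1 n).filter (fun i => X (γ i) ω = false)).card : ℝ)
        < 1 / (4 * (k : ℝ)) * n} ⊆ ⋃ t ∈ I, G t := by
    rintro ω ⟨γ, h1, h2, h3⟩
    have hvnat : (γ 0).1 + (γ 0).2 ≤ n := by exact_mod_cast h1
    have hcnat : 4 * k * (((Finset.Icc 1 n).filter (fun i => X (γ i) ω = false)).card) < n := by
      have hk4 : (0 : ℝ) < 4 * (k : ℝ) := by linarith
      have := mul_lt_mul_of_pos_left h3 hk4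
      rw [show 4 * (k : ℝ) * (1 / (4 * (k : ℝ)) * n) = n by field_simp] at this
      exact_mod_cast this
    obtain ⟨v, hvle, d, T, hTcard, hopen⟩ := cover hk1 X ω γ hvnat h2 hcnat
    refine Set.mem_biUnion (show (v, d, T) ∈ I from ?_) ?_
    · rw [hI]
      refine Finset.mem_product.2 ⟨?_, Finset.mem_product.2 ⟨Finset.mem_univ _, ?_⟩⟩
      · rw [hV, Finset.mem_filter, Finset.mem_product]
        simp only [Finset.mem_range]
        omega
      · exact Finset.mem_filter.2 ⟨Finset.mem_univ _, hTcard⟩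
    · rw [hG]
      exact Set.mem_iInter₂.2 hopen
  -- pairwise disjointness of boxes of blocks
  have hdis : ∀ (v : ℕ × ℕ) (d : Fin m → Fin (k + 1)) (T : Finset (Fin m)),
      (T : Set (Fin m)).Pairwise fun i j =>
        Disjoint (box k (usite k m v d (i : ℕ))) (box k (usite k m v d (j : ℕ))) := by
    intro v d T i _ j _ hij
    have key : ∀ a b : Fin m, (a : ℕ) < (b : ℕ) →
        Disjoint (box k (usite k m v d (a : ℕ))) (box k (usite k m v d (b : ℕ))) := by
      intro a b hab
      refine box_disjoint ?_
      rw [usite_sum, usite_sum]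
      have h1 : ((a : ℕ) + 1) * k ≤ (b : ℕ) * k := Nat.mul_le_mul_right k (by omega)
      have h2 : ((a : ℕ) + 1) * k = (a : ℕ) * k + k := by ring
      omega
    rcases Nat.lt_or_ge (i : ℕ) (j : ℕ) with h | h
    · exact key i j h
    · have hji : (j : ℕ) < (i : ℕ) := by
        rcases Nat.lt_or_ge (j : ℕ) (i : ℕ) with h' | h'
        · exact h'
        · exact absurd (Fin.ext (le_antisymm h' h)) hij
      exact (key j i hji).symm
  -- each event in the union has probability at most `(ofReal ε) ^ q`
  have hterm : ∀ t ∈ I, P (G t) ≤ (ENNReal.ofReal ε) ^ q := by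
    rintro ⟨v, d, T⟩ ht
    have hTcard : T.card = q := by
      rw [hI] at ht
      have := (Finset.mem_product.1 (Finset.mem_product.1 ht).2).2
      exact (Finset.mem_filter.1 this).2
    rw [hG]
    simp only
    rw [blocks_indep P X hmeas hindep k T (fun j => usite k m v d (j : ℕ)) (hdis v d T)]
    calc ∏ j ∈ T, P (OpenFrom X k (usite k m v d (j : ℕ)))
        = ∏ _j ∈ T, P₀ := by
          refine Finset.prod_congr rfl fun j _ => ?_
          rw [hP₀]
          exact openFrom_prob_eq P X hmeas hindep hid k _
      _ = P₀ ^ q := by rw [Finset.prod_const, hTcard]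
      _ ≤ (ENNReal.ofReal ε) ^ q := pow_le_pow_left' hP₀ε q
  -- counting
  have hIcard : I.card ≤ (n + 1) ^ 2 * ((k + 1) ^ m * 2 ^ m) := by
    rw [hI, Finset.card_product, Finset.card_product]
    have h1 : V.card ≤ (n + 1) ^ 2 := by
      calc V.card ≤ (Finset.range (n + 1) ×ˢ Finset.range (n + 1)).card :=
            Finset.card_filter_le _ _
        _ = (n + 1) ^ 2 := by rw [Finset.card_product, Finset.card_range]; ring
    have h2 : (Finset.univ : Finset (Fin m → Fin (k + 1))).card = (k + 1) ^ m := by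
      rw [Finset.card_univ, Fintype.card_fun]
      simp
    have h3 : (Finset.univ.filter (fun T : Finset (Fin m) => T.card = q)).card ≤ 2 ^ m := by
      calc (Finset.univ.filter (fun T : Finset (Fin m) => T.card = q)).card
          ≤ (Finset.univ : Finset (Finset (Fin m))).card := Finset.card_filter_le _ _
        _ = 2 ^ m := by rw [Finset.card_univ, Fintype.card_finset, Fintype.card_fin]
    refine Nat.mul_le_mul h1 ?_
    rw [h2]
    exact Nat.mul_le_mul_left _ h3
  -- putting the probability bound together
  obtain ⟨N, hN⟩ : ∃ N : ℕ, N = (n + 1) ^ 2 * ((k + 1) ^ m * 2 ^ m) := ⟨_, rfl⟩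
  have hPle : P {ω : Ω | ∃ γ : ℕ → ℕ × ℕ,
      ((γ 0).1 + (γ 0).2 : ℝ) ≤ n ∧
      (∀ j < n, γ (j + 1) = γ j + (1, 0) ∨ γ (j + 1) = γ j + (0, 1)) ∧
      (((Finset.Icc 1 n).filter (fun i => X (γ i) ω = false)).card : ℝ)
        < 1 / (4 * (k : ℝ)) * n} ≤ ENNReal.ofReal ((N : ℝ) * ε ^ q) := by
    calc P _ ≤ P (⋃ t ∈ I, G t) := measure_mono hcover
      _ ≤ ∑ t ∈ I, P (G t) := measure_biUnion_finset_le I G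
      _ ≤ I.card • (ENNReal.ofReal ε) ^ q := Finset.sum_le_card_nsmul I _ _ hterm
      _ = (I.card : ENNReal) * (ENNReal.ofReal ε) ^ q := by rw [nsmul_eq_mul]
      _ ≤ (N : ENNReal) * (ENNReal.ofReal ε) ^ q := by
          refine mul_le_mul_left ?_ _
          rw [hN]
          exact_mod_cast hIcard
      _ = ENNReal.ofReal ((N : ℝ) * ε ^ q) := by
          rw [← ENNReal.ofReal_pow hε0, ← ENNReal.ofReal_natCast N,
            ← ENNReal.ofReal_mul (by positivity)]
  -- final real arithmetic
  have harith : (N : ℝ) * ε ^ q ≤ (108 * (k : ℝ) ^ 3 * Real.exp 2)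
      * Real.exp (-(1 / (k : ℝ)) * n) := by
    have := arith hk1 hn hε0 hεk
    rw [hN]
    push_cast
    calc ((n : ℝ) + 1) ^ 2 * (((k : ℝ) + 1) ^ m * 2 ^ m) * ε ^ q
        = ((n : ℝ) + 1) ^ 2 * (((k : ℝ) + 1) ^ m * 2 ^ m * ε ^ q) := by ring
      _ ≤ _ := this
  refine ENNReal.toReal_le_of_le_ofReal (by positivity) ?_
  exact le_trans hPle (ENNReal.ofReal_le_ofReal harith)
end
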